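/- Let j be a positive integer, s ∈ ℤ, t a positive integer, and let β ∈ E be a nonzero element satisfying τ_x^t(β) = q^s·β (for instance β = c·x^{s/t} with c ∈ F). Suppose α = q^{−s·j}·τ_x^t(γ) − γ for some γ ∈ E. Then the rational function α/(y − β)^j is (τ_x,τ_y)-summable in E(y). -/

import Mathlib

/-- `E`, an algebraic closure of the rational function field `F(x)`. -/
noncomputable abbrev Ebar (F : Type*) [Field F] : Type _ := AlgebraicClosure (RatFunc F)

/-- The element `x` of `F(x) ⊆ E`. -/
noncomputable abbrev Ebar.x (F : Type*) [Field F] : Ebar F :=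
  algebraMap (RatFunc F) (Ebar F) RatFunc.X

/-- The embedding of a constant `a ∈ F` into `E`. -/
noncomputable abbrev Ebar.c (F : Type*) [Field F] (a : F) : Ebar F :=
  algebraMap (RatFunc F) (Ebar F) (RatFunc.C a)

/-- Telescoping for natural powers of a ring automorphism. -/
private lemma tel_nat {R : Type*} [CommRing R] (b : R ≃+* R) :
    ∀ (t : ℕ) (u : R), ∃ g, (b ^ t) u - u = b g - g := by
  intro t
  induction t with
  | zero => intro u; exact ⟨0, by simp only [pow_zero]; change u - u = _; simp⟩
  | succ n ih =>
    intro u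
    obtain ⟨g, hg⟩ := ih (b u)
    refine ⟨g + u, ?_⟩
    have h1 : (b ^ (n + 1)) u = (b ^ n) (b u) := by rw [pow_succ]; rfl
    rw [h1, map_add]
    linear_combination hg

/-- Telescoping for integer powers of an algebra automorphism. -/
private lemma tel_zpow {R A : Type*} [CommSemiring R] [CommRing A] [Algebra R A]
    (b : A ≃ₐ[R] A) : ∀ (s : ℤ) (u : A), ∃ h, (b ^ s) u - u = b h - h := by
  intro s
  induction s using Int.induction_on with
  | zero => intro u; exact ⟨0, by simp only [zpow_zero]; change u - u = _; simp⟩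
  | succ n ih =>
    intro u
    obtain ⟨h, hh⟩ := ih (b u)
    refine ⟨h + u, ?_⟩
    have h1 : (b ^ ((n : ℤ) + 1)) u = (b ^ (n : ℤ)) (b u) := by rw [zpow_add_one]; rfl
    rw [h1, map_add]
    linear_combination hh
  | pred n ih =>
    intro u
    obtain ⟨h, hh⟩ := ih (b.symm u)
    refine ⟨h - b.symm u, ?_⟩
    have h1 : (b ^ (-(n : ℤ) - 1)) u = (b ^ (-(n : ℤ))) (b.symm u) := by
      rw [zpow_sub, zpow_one]; rfl
    rw [h1, map_sub, b.apply_symm_apply]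
    linear_combination hh

/-- Let `F` be an algebraically closed field of characteristic zero, `q ∈ F` nonzero
and not a root of unity, `E` the algebraic closure of `F(x)`, `τ_x` an automorphism of
`E` fixing `F` with `τ_x(x) = q·x`, extended coefficientwise to `E(y)` (denoted `Tx`),
and `τ_y` the `E`-automorphism of `E(y)` with `τ_y(y) = q·y`.  Let `j, t` be positive
integers and `s ∈ ℤ`, and let `β ∈ E` be nonzero with `τ_x^t(β) = q^s·β`.  If
`α = q^{-s·j}·τ_x^t(γ) - γ` for some `γ ∈ E`, then `α/(y - β)^j` is
`(τ_x,τ_y)`-summable in `E(y)`. -/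
theorem simple_fraction_qshift_summable
    (F : Type*) [Field F] [IsAlgClosed F] [CharZero F]
    (q : F) (hq0 : q ≠ 0) (hqru : ∀ k : ℕ, 0 < k → q ^ k ≠ 1)
    (τx : Ebar F ≃+* Ebar F)
    (hτxF : ∀ a : F, τx (Ebar.c F a) = Ebar.c F a)
    (hτxx : τx (Ebar.x F) = Ebar.c F q * Ebar.x F)
    (Tx : RatFunc (Ebar F) ≃+* RatFunc (Ebar F))
    (hTxC : ∀ a : Ebar F, Tx (RatFunc.C a) = RatFunc.C (τx a))
    (hTxX : Tx RatFunc.X = RatFunc.X)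
    (τy : RatFunc (Ebar F) ≃ₐ[Ebar F] RatFunc (Ebar F))
    (hτy : τy RatFunc.X = RatFunc.C (Ebar.c F q) * RatFunc.X)
    (j : ℕ) (hj : 0 < j) (s : ℤ) (t : ℕ) (ht : 0 < t)
    (β α : Ebar F) (hβ0 : β ≠ 0)
    (hβ : (τx ^ t) β = Ebar.c F q ^ s * β)
    (hα : ∃ γ : Ebar F, α = Ebar.c F q ^ (-(s * (j : ℤ))) * (τx ^ t) γ - γ) :
    ∃ g h : RatFunc (Ebar F),
      RatFunc.C α / (RatFunc.X - RatFunc.C β) ^ j = Tx g - g + τy h - h := by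
  obtain ⟨γ, hγ⟩ := hα
  set c : Ebar F := Ebar.c F q with hc
  have hc0 : c ≠ 0 := by
    simp only [hc, Ebar.c, ne_eq, map_eq_zero]
    exact fun h => hq0 (by simpa using h)
  -- Tx^n acts on constants via τx^n, and fixes X
  have hTxnC : ∀ (n : ℕ) (a : Ebar F), (Tx ^ n) (RatFunc.C a) = RatFunc.C ((τx ^ n) a) := by
    intro n
    induction n with
    | zero => intro a; rfl
    | succ m ih =>
      intro a
      have h1 : (Tx ^ (m + 1)) (RatFunc.C a) = (Tx ^ m) (Tx (RatFunc.C a)) := by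
        rw [pow_succ]; rfl
      have h2 : (τx ^ (m + 1)) a = (τx ^ m) (τx a) := by rw [pow_succ]; rfl
      rw [h1, h2, hTxC, ih]
  have hTxnX : ∀ n : ℕ, (Tx ^ n) RatFunc.X = RatFunc.X := by
    intro n
    induction n with
    | zero => rfl
    | succ m ih =>
      have h1 : (Tx ^ (m + 1)) RatFunc.X = (Tx ^ m) (Tx RatFunc.X) := by rw [pow_succ]; rfl
      rw [h1, hTxX, ih]
  -- τy^s fixes constants and scales X by c^s
  have hτyC : ∀ (m : ℤ) (a : Ebar F), (τy ^ m) (RatFunc.C a) = RatFunc.C a := by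
    intro m a
    have := (τy ^ m).commutes a
    rwa [RatFunc.algebraMap_eq_C] at this
  have hτyinvX : τy.symm RatFunc.X = RatFunc.C c⁻¹ * RatFunc.X := by
    apply τy.injective
    rw [τy.apply_symm_apply, map_mul, hτy]
    have : τy (RatFunc.C c⁻¹) = RatFunc.C c⁻¹ := by
      have := τy.commutes c⁻¹
      rwa [RatFunc.algebraMap_eq_C] at this
    rw [this, ← mul_assoc, ← map_mul, inv_mul_cancel₀ hc0, map_one, one_mul]
  have hτynX : ∀ m : ℤ, (τy ^ m) RatFunc.X = RatFunc.C (c ^ m) * RatFunc.X := by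
    intro m
    induction m using Int.induction_on with
    | zero => simp
    | succ n ih =>
      have h1 : (τy ^ ((n : ℤ) + 1)) RatFunc.X = (τy ^ (n : ℤ)) (τy RatFunc.X) := by
        rw [zpow_add_one]; rfl
      rw [h1, hτy, map_mul, hτyC, ih, ← mul_assoc, ← map_mul]
      congr 2
      rw [zpow_add_one₀ hc0]
      ring
    | pred n ih =>
      have h1 : (τy ^ (-(n : ℤ) - 1)) RatFunc.X = (τy ^ (-(n : ℤ))) (τy.symm RatFunc.X) := by
        rw [zpow_sub, zpow_one]; rfl
      rw [h1, hτyinvX, map_mul, hτyC, ih, ← mul_assoc, ← map_mul]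
      congr 2
      rw [zpow_sub₀ hc0, zpow_one]
      field_simp
  -- the basic building block
  set D : RatFunc (Ebar F) := (RatFunc.X - RatFunc.C β) ^ j with hD
  set u : RatFunc (Ebar F) := RatFunc.C γ * D⁻¹ with hu
  -- Step A : Tx^t u
  have stepA : (Tx ^ t) u = RatFunc.C ((τx ^ t) γ) *
      ((RatFunc.X - RatFunc.C (c ^ s * β)) ^ j)⁻¹ := by
    rw [hu, map_mul, hTxnC, map_inv₀, hD, map_pow, map_sub, hTxnX, hTxnC, hβ]
  -- Step B : τy^s (Tx^t u) = C (c^(-(s*j)) * τx^t γ) * D⁻¹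
  have stepB : (τy ^ s) ((Tx ^ t) u) =
      RatFunc.C (c ^ (-(s * (j : ℤ))) * (τx ^ t) γ) * D⁻¹ := by
    rw [stepA, map_mul, hτyC, map_inv₀, map_pow, map_sub, hτynX, hτyC]
    have factor : RatFunc.C (c ^ s) * RatFunc.X - RatFunc.C (c ^ s * β)
        = RatFunc.C (c ^ s) * (RatFunc.X - RatFunc.C β) := by
      rw [map_mul]; ring
    rw [factor, mul_pow, ← map_pow, mul_inv, ← map_inv₀, map_mul, hD]
    have : ((c ^ s) ^ j)⁻¹ = c ^ (-(s * (j : ℤ))) := by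
      rw [zpow_neg, zpow_mul, zpow_natCast]
    rw [this]
    ring
  -- key identity
  have key : (τy ^ s) ((Tx ^ t) u) - u = RatFunc.C α * D⁻¹ := by
    rw [stepB, hu, ← sub_mul, ← map_sub, hγ, hc]
  obtain ⟨h, hh⟩ := tel_zpow τy s ((Tx ^ t) u)
  obtain ⟨g, hg⟩ := tel_nat Tx t u
  refine ⟨g, h, ?_⟩
  rw [div_eq_mul_inv]
  linear_combination hh + hg - key
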